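/- Let X be an infinite sequence over a finite alphabet Σ with |Σ| ≥ 2, let d ≥ 1, j ∈ {0,…,d−1}, and let ε > 0. If dim_FS(X) ≥ (d−1)/d + ε, then dim_FS(A_{d,j}) ≥ dim_FS^{{A_{d,k} : k ≠ j}}(A_{d,j}) ≥ d·ε. -/

import Mathlib

open Filter

/-- A finite-state gambler over alphabet `α` with state space `Fin (m+1)`. -/
structure FSG (α : Type) [Fintype α] (m : ℕ) where
  δ : Fin (m + 1) → α → Fin (m + 1)
  bet : Fin (m + 1) → α → ℚ
  bet_nonneg : ∀ q a, 0 ≤ bet q a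
  bet_sum : ∀ q, ∑ a, bet q a = 1
  q₀ : Fin (m + 1)

namespace FSG

variable {α : Type} [Fintype α] {m : ℕ}

/-- The state reached after reading the first `n` symbols of `X`. -/
def state (G : FSG α m) (X : ℕ → α) : ℕ → Fin (m + 1)
  | 0 => G.q₀
  | n + 1 => G.δ (G.state X n) (X n)

/-- The value of the `s`-gale of `G` on the prefix `X[:n]`. -/
noncomputable def capital (G : FSG α m) (s : ℝ) (X : ℕ → α) : ℕ → ℝ
  | 0 => 1
  | n + 1 => (Fintype.card α : ℝ) ^ s * (G.bet (G.state X n) (X n) : ℝ) * G.capital s X n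

/-- The `s`-gale of `G` succeeds on `X` : `limsup_n d(X[:n]) = ∞`. -/
def Succeeds (G : FSG α m) (s : ℝ) (X : ℕ → α) : Prop :=
  ∀ C : ℝ, ∃ n, C < G.capital s X n

/-- The `s`-gale of `G` strongly succeeds on `X` : `liminf_n d(X[:n]) = ∞`. -/
def StrSucceeds (G : FSG α m) (s : ℝ) (X : ℕ → α) : Prop :=
  Tendsto (G.capital s X) atTop atTop

end FSG

/-- Finite-state dimension of a sequence. -/
noncomputable def dimFS {α : Type} [Fintype α] (X : ℕ → α) : ℝ :=
  sInf {s : ℝ | 0 ≤ s ∧ ∃ (m : ℕ) (G : FSG α m), G.Succeeds s X}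

/-- Finite-state strong dimension of a sequence. -/
noncomputable def DimFS {α : Type} [Fintype α] (X : ℕ → α) : ℝ :=
  sInf {s : ℝ | 0 ≤ s ∧ ∃ (m : ℕ) (G : FSG α m), G.StrSucceeds s X}

/-- A finite-state relative gambler over input alphabet `α`, oracle alphabet `β`,
oracle window length `ℓ`, with state space `Fin (m+1)`. -/
structure FSRG (α β : Type) [Fintype α] [Fintype β] (ℓ m : ℕ) where
  δ : Fin (m + 1) → (Fin ℓ → β) → α → Fin (m + 1)
  bet : Fin (m + 1) → (Fin ℓ → β) → α → ℚ
  bet_nonneg : ∀ q y a, 0 ≤ bet q y a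
  bet_sum : ∀ q y, ∑ a, bet q y a = 1
  q₀ : Fin (m + 1)

namespace FSRG

variable {α β : Type} [Fintype α] [Fintype β] {ℓ m : ℕ}

/-- The state reached after reading the first `n` symbols of `X`, with oracle `Y`
(the oracle window at step `i` being `Y[i:i+ℓ]`). -/
def state (G : FSRG α β ℓ m) (Y : ℕ → β) (X : ℕ → α) : ℕ → Fin (m + 1)
  | 0 => G.q₀
  | n + 1 => G.δ (G.state Y X n) (fun j => Y (n + j.val)) (X n)

/-- The value of the `s`-gale of `G` with oracle `Y` on the prefix `X[:n]`. -/
noncomputable def capital (G : FSRG α β ℓ m) (s : ℝ) (Y : ℕ → β) (X : ℕ → α) : ℕ → ℝ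
  | 0 => 1
  | n + 1 =>
      (Fintype.card α : ℝ) ^ s * (G.bet (G.state Y X n) (fun j => Y (n + j.val)) (X n) : ℝ) *
        G.capital s Y X n

/-- Success: `limsup_n d(X[:n]) = ∞`. -/
def Succeeds (G : FSRG α β ℓ m) (s : ℝ) (Y : ℕ → β) (X : ℕ → α) : Prop :=
  ∀ C : ℝ, ∃ n, C < G.capital s Y X n

/-- Strong success: `liminf_n d(X[:n]) = ∞`. -/
def StrSucceeds (G : FSRG α β ℓ m) (s : ℝ) (Y : ℕ → β) (X : ℕ → α) : Prop :=
  Tendsto (G.capital s Y X) atTop atTop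

end FSRG

/-- Finite-state relative dimension `dim_FS^Y(X)`. -/
noncomputable def dimFSRel {α β : Type} [Fintype α] [Fintype β] (X : ℕ → α) (Y : ℕ → β) : ℝ :=
  sInf {s : ℝ | 0 ≤ s ∧ ∃ (ℓ m : ℕ) (G : FSRG α β ℓ m), G.Succeeds s Y X}

/-- Finite-state relative strong dimension `Dim_FS^Y(X)`. -/
noncomputable def DimFSRel {α β : Type} [Fintype α] [Fintype β] (X : ℕ → α) (Y : ℕ → β) : ℝ :=
  sInf {s : ℝ | 0 ≤ s ∧ ∃ (ℓ m : ℕ) (G : FSRG α β ℓ m), G.StrSucceeds s Y X}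

open Classical in
/-- `N(u,x;v,y)`: the number of indices `i < k` such that the `i`-th disjoint block of
length `ℓ` of `X` equals `u` and that of `Y` equals `v`. -/
noncomputable def blockCount {α β : Type} (X : ℕ → α) (Y : ℕ → β) (ℓ k : ℕ)
    (u : Fin ℓ → α) (v : Fin ℓ → β) : ℕ :=
  ((Finset.range k).filter fun i =>
    (∀ j : Fin ℓ, X (i * ℓ + j.val) = u j) ∧ ∀ j : Fin ℓ, Y (i * ℓ + j.val) = v j).card

/-- The `ℓ`-length conditional block entropy `H_ℓ(X[:kℓ] | Y[:kℓ])`.  (Terms with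
`N(u,x;v,y) = 0` vanish since `0 · log 0 = 0` under Mathlib's convention `log 0 = 0`.) -/
noncomputable def condBlockEntropy {α β : Type} [Fintype α] [Fintype β]
    (X : ℕ → α) (Y : ℕ → β) (ℓ k : ℕ) : ℝ :=
  -(1 / (ℓ * Real.log (Fintype.card α))) *
    ∑ v : Fin ℓ → β, ∑ u : Fin ℓ → α,
      ((blockCount X Y ℓ k u v : ℝ) / k) *
        Real.log ((blockCount X Y ℓ k u v : ℝ) /
          ∑ u' : Fin ℓ → α, (blockCount X Y ℓ k u' v : ℝ))

/-- `H_ℓ(X|Y) = liminf_{k → ∞} H_ℓ(X[:kℓ] | Y[:kℓ])`. -/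
noncomputable def relBlockEntropyAt {α β : Type} [Fintype α] [Fintype β]
    (X : ℕ → α) (Y : ℕ → β) (ℓ : ℕ) : ℝ :=
  liminf (fun k => condBlockEntropy X Y ℓ k) atTop

/-- `H(X|Y) = inf_{ℓ ≥ 1} H_ℓ(X|Y)`. -/
noncomputable def relBlockEntropy {α β : Type} [Fintype α] [Fintype β]
    (X : ℕ → α) (Y : ℕ → β) : ℝ :=
  ⨅ ℓ : ℕ, relBlockEntropyAt X Y (ℓ + 1)

/-- `H̄_ℓ(X|Y) = limsup_{k → ∞} H_ℓ(X[:kℓ] | Y[:kℓ])`. -/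
noncomputable def relUpperBlockEntropyAt {α β : Type} [Fintype α] [Fintype β]
    (X : ℕ → α) (Y : ℕ → β) (ℓ : ℕ) : ℝ :=
  limsup (fun k => condBlockEntropy X Y ℓ k) atTop

/-- `H̄(X|Y) = inf_{ℓ ≥ 1} H̄_ℓ(X|Y)`. -/
noncomputable def relUpperBlockEntropy {α β : Type} [Fintype α] [Fintype β]
    (X : ℕ → α) (Y : ℕ → β) : ℝ :=
  ⨅ ℓ : ℕ, relUpperBlockEntropyAt X Y (ℓ + 1)

/-- The arithmetic-progression subsequence `A_{d,a}(X) = X[a] X[a+d] X[a+2d] …`. -/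
def AP {α : Type} (X : ℕ → α) (d a : ℕ) : ℕ → α := fun n => X (a + n * d)

/-- The product sequence of a family of sequences: its `n`-th symbol is the tuple
of the `n`-th symbols. -/
def prodSeq {α ι : Type} (Ys : ι → ℕ → α) : ℕ → ι → α := fun n i => Ys i n

/-- Relative dimension with a finite family of oracle sequences, via the product sequence. -/
noncomputable def dimFSRelFam {α ι : Type} [Fintype α] [Fintype ι] [DecidableEq ι]
    (X : ℕ → α) (Ys : ι → ℕ → α) : ℝ :=
  dimFSRel X (prodSeq Ys)

/-- Relative strong dimension with a finite family of oracle sequences. -/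
noncomputable def DimFSRelFam {α ι : Type} [Fintype α] [Fintype ι] [DecidableEq ι]
    (X : ℕ → α) (Ys : ι → ℕ → α) : ℝ :=
  DimFSRel X (prodSeq Ys)

/-- The interleaving `Y₀ ⊕ ⋯ ⊕ Y_{n-1}`: the `i`-th symbol is `Y_{i mod n}[⌊i/n⌋]`. -/
def interleave {α : Type} {n : ℕ} (hn : 0 < n) (Ys : Fin n → ℕ → α) : ℕ → α :=
  fun i => Ys ⟨i % n, Nat.mod_lt i hn⟩ (i / n)

/-- The interleaving `A ⊕ B` of two sequences. -/
def interleave2 {α : Type} (A B : ℕ → α) : ℕ → α :=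
  fun i => if i % 2 = 0 then A (i / 2) else B (i / 2)

namespace APDim

open Finset

variable {α β : Type} [Fintype α] [Fintype β] {ℓ m : ℕ}

lemma capital_nonneg (G : FSRG α β ℓ m) (s : ℝ) (Y : ℕ → β) (Z : ℕ → α) (n : ℕ) :
    0 ≤ G.capital s Y Z n := by
  induction n with
  | zero => norm_num [FSRG.capital]
  | succ n ih =>
      simp only [FSRG.capital]
      have h1 : (0:ℝ) ≤ (Fintype.card α : ℝ) ^ s := Real.rpow_nonneg (by positivity) s
      have h2 : (0:ℝ) ≤ ((G.bet (G.state Y Z n) (fun τ => Y (n + τ.val)) (Z n) : ℚ) : ℝ) := by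
        exact_mod_cast G.bet_nonneg _ _ _
      exact mul_nonneg (mul_nonneg h1 h2) ih

lemma fsg_capital_nonneg (G : FSG α m) (s : ℝ) (Z : ℕ → α) (n : ℕ) :
    0 ≤ G.capital s Z n := by
  induction n with
  | zero => norm_num [FSG.capital]
  | succ n ih =>
      simp only [FSG.capital]
      have h1 : (0:ℝ) ≤ (Fintype.card α : ℝ) ^ s := Real.rpow_nonneg (by positivity) s
      have h2 : (0:ℝ) ≤ ((G.bet (G.state Z n) (Z n) : ℚ) : ℝ) := by
        exact_mod_cast G.bet_nonneg _ _
      exact mul_nonneg (mul_nonneg h1 h2) ih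

lemma state_congr (G : FSRG α β ℓ m) (Y1 Y2 : ℕ → β) (A1 A2 : ℕ → α) (k : ℕ)
    (hY : ∀ u, u + 2 ≤ k + ℓ → Y1 u = Y2 u) (hA : ∀ u, u < k → A1 u = A2 u) :
    G.state Y1 A1 k = G.state Y2 A2 k := by
  induction k with
  | zero => rfl
  | succ k ih =>
      have hs : G.state Y1 A1 k = G.state Y2 A2 k :=
        ih (fun u hu => hY u (by omega)) (fun u hu => hA u (by omega))
      simp only [FSRG.state, hs, hA k (by omega)]
      congr 1
      funext τ
      exact hY _ (by have := τ.isLt; omega)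

lemma capital_congr (G : FSRG α β ℓ m) (s : ℝ) (Y1 Y2 : ℕ → β) (A1 A2 : ℕ → α) (k : ℕ)
    (hY : ∀ u, u + 2 ≤ k + ℓ → Y1 u = Y2 u) (hA : ∀ u, u < k → A1 u = A2 u) :
    G.capital s Y1 A1 k = G.capital s Y2 A2 k := by
  induction k with
  | zero => rfl
  | succ k ih =>
      have hc : G.capital s Y1 A1 k = G.capital s Y2 A2 k :=
        ih (fun u hu => hY u (by omega)) (fun u hu => hA u (by omega))
      have hs : G.state Y1 A1 k = G.state Y2 A2 k :=
        state_congr G Y1 Y2 A1 A2 k (fun u hu => hY u (by omega)) (fun u hu => hA u (by omega))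
      have hw : (fun τ : Fin ℓ => Y1 (k + τ.val)) = (fun τ : Fin ℓ => Y2 (k + τ.val)) := by
        funext τ
        exact hY _ (by have := τ.isLt; omega)
      simp only [FSRG.capital, hc, hs, hw, hA k (by omega)]

/-- run of the machine `G` seeded at state `q` with environment `(YY, AA)`. -/
def runSt (G : FSRG α β ℓ m) (q : Fin (m+1)) (YY : ℕ → β) (AA : ℕ → α) : ℕ → Fin (m+1)
  | 0 => q
  | σ+1 => G.δ (runSt G q YY AA σ) (fun τ => YY (σ + τ.val)) (AA σ)

lemma state_shift (G : FSRG α β ℓ m) (Y : ℕ → β) (A : ℕ → α) (c : ℕ) :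
    ∀ σ, G.state Y A (c + σ) =
      runSt G (G.state Y A c) (fun u => Y (c + u)) (fun u => A (c + u)) σ := by
  intro σ
  induction σ with
  | zero => rfl
  | succ σ ih =>
      show G.state Y A ((c + σ) + 1) = _
      simp only [FSRG.state, runSt, ih]
      congr 1
      funext τ
      congr 1
      omega

/-- product of the bets of `G` along `cnt` steps, from seed `q`, environment `(YY,AA)`. -/
def prodBets (G : FSRG α β ℓ m) (q : Fin (m+1)) (YY : ℕ → β) (AA : ℕ → α) (cnt : ℕ) : ℚ :=
  ∏ σ ∈ Finset.range cnt, G.bet (runSt G q YY AA σ) (fun τ => YY (σ + τ.val)) (AA σ)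

lemma prodBets_nonneg (G : FSRG α β ℓ m) (q : Fin (m+1)) (YY : ℕ → β) (AA : ℕ → α) (cnt : ℕ) :
    0 ≤ prodBets G q YY AA cnt :=
  Finset.prod_nonneg (fun σ _ => G.bet_nonneg _ _ _)

lemma capital_run (G : FSRG α β ℓ m) (s : ℝ) (Y : ℕ → β) (A : ℕ → α) (c k : ℕ) :
    G.capital s Y A (c + k) = G.capital s Y A c * ((Fintype.card α : ℝ) ^ s) ^ k *
      ((prodBets G (G.state Y A c) (fun u => Y (c + u)) (fun u => A (c + u)) k : ℚ) : ℝ) := by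
  induction k with
  | zero => simp [prodBets]
  | succ k ih =>
      show G.capital s Y A ((c + k) + 1) = _
      simp only [FSRG.capital]
      have hp : prodBets G (G.state Y A c) (fun u => Y (c + u)) (fun u => A (c + u)) (k+1)
          = prodBets G (G.state Y A c) (fun u => Y (c + u)) (fun u => A (c + u)) k *
            G.bet (runSt G (G.state Y A c) (fun u => Y (c + u)) (fun u => A (c + u)) k)
              (fun τ => Y (c + (k + τ.val))) (A (c + k)) :=
        Finset.prod_range_succ _ _
      rw [hp, ih, state_shift G Y A c k]
      push_cast
      have hw : (fun τ : Fin ℓ => Y ((c + k) + τ.val)) = (fun τ : Fin ℓ => Y (c + (k + τ.val))) := by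
        funext τ; congr 1; omega
      rw [hw]
      ring

lemma runSt_congr (G : FSRG α β ℓ m) (q : Fin (m+1)) (Y1 Y2 : ℕ → β) (A1 A2 : ℕ → α) (cnt : ℕ)
    (hY : ∀ u, u + 2 ≤ cnt + ℓ → Y1 u = Y2 u) (hA : ∀ u, u < cnt → A1 u = A2 u) :
    ∀ σ, σ ≤ cnt → runSt G q Y1 A1 σ = runSt G q Y2 A2 σ := by
  intro σ
  induction σ with
  | zero => intro _; rfl
  | succ σ ih =>
      intro hσ
      simp only [runSt, ih (by omega), hA σ (by omega)]
      congr 1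
      funext τ
      exact hY _ (by have := τ.isLt; omega)

lemma prodBets_congr (G : FSRG α β ℓ m) (q : Fin (m+1)) (Y1 Y2 : ℕ → β) (A1 A2 : ℕ → α) (cnt : ℕ)
    (hY : ∀ u, u + 2 ≤ cnt + ℓ → Y1 u = Y2 u) (hA : ∀ u, u < cnt → A1 u = A2 u) :
    prodBets G q Y1 A1 cnt = prodBets G q Y2 A2 cnt := by
  refine Finset.prod_congr rfl (fun σ hσ => ?_)
  rw [Finset.mem_range] at hσ
  rw [runSt_congr G q Y1 Y2 A1 A2 cnt hY hA σ (by omega), hA σ hσ]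
  congr 1
  funext τ
  exact hY _ (by have := τ.isLt; omega)

end APDim
namespace APDim

open Finset

variable {α : Type} [Fintype α]

lemma sum_comp_emb {k K : ℕ} (e : Fin k → Fin K) (he : Function.Injective e)
    (g : (Fin k → α) → ℝ) :
    ∑ z : Fin K → α, g (fun u => z (e u)) =
      (Fintype.card α : ℝ) ^ (K - k) * ∑ w : Fin k → α, g w := by
  classical
  have hck : Fintype.card {x : Fin K // x ∈ Set.range e} = k := by
    have h := (Fintype.card_congr (Equiv.ofInjective e he)).symm
    rwa [Fintype.card_fin] at h
  rw [← Equiv.sum_comp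
      (Equiv.piEquivPiSubtypeProd (fun x : Fin K => x ∈ Set.range e) (fun _ => α)).symm
      (fun z => g (fun u => z (e u))), Fintype.sum_prod_type]
  have hsum : ∀ x : {x : Fin K // x ∈ Set.range e} → α,
      (∑ y : {x : Fin K // ¬ x ∈ Set.range e} → α,
        g (fun u => ((Equiv.piEquivPiSubtypeProd (fun x : Fin K => x ∈ Set.range e)
            (fun _ => α)).symm (x, y)) (e u)))
        = (Fintype.card α : ℝ) ^ (K - k) * g (fun u => x ⟨e u, Set.mem_range_self u⟩) := by
    intro x
    have hpt : ∀ y : {x : Fin K // ¬ x ∈ Set.range e} → α,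
        g (fun u => ((Equiv.piEquivPiSubtypeProd (fun x : Fin K => x ∈ Set.range e)
            (fun _ => α)).symm (x, y)) (e u))
          = g (fun u => x ⟨e u, Set.mem_range_self u⟩) := by
      intro y
      congr 1
      funext u
      simp [Equiv.piEquivPiSubtypeProd_symm_apply, Set.mem_range_self u]
    rw [Finset.sum_congr rfl (fun y _ => hpt y), Finset.sum_const, Finset.card_univ,
      nsmul_eq_mul]
    have hcompl : Fintype.card ({x : Fin K // ¬ x ∈ Set.range e} → α)
        = Fintype.card α ^ (K - k) := by
      rw [Fintype.card_fun, Fintype.card_subtype_compl, Fintype.card_fin, hck]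
    rw [hcompl]
    push_cast
    ring
  rw [Finset.sum_congr rfl (fun x _ => hsum x), ← Finset.mul_sum]
  congr 1
  rw [← Equiv.sum_comp (Equiv.arrowCongr (Equiv.ofInjective e he) (Equiv.refl α))
      (fun x : {x : Fin K // x ∈ Set.range e} → α => g (fun u => x ⟨e u, Set.mem_range_self u⟩))]
  refine Finset.sum_congr rfl (fun w _ => ?_)
  congr 1
  funext u
  simp only [Equiv.arrowCongr_apply, Function.comp_apply, Equiv.coe_refl, id_eq]
  congr 1
  rw [Equiv.symm_apply_eq]
  apply Subtype.ext
  simp [Equiv.ofInjective_apply]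

lemma update_sum {E : ℕ} (v : Fin E) (f : (Fin E → α) → ℝ) :
    ∑ z : Fin E → α, ∑ a : α, f (Function.update z v a) =
      (Fintype.card α : ℝ) * ∑ z : Fin E → α, f z := by
  classical
  rw [← Equiv.sum_comp (Equiv.funSplitAt v α).symm
      (fun z => ∑ a : α, f (Function.update z v a)),
    ← Equiv.sum_comp (Equiv.funSplitAt v α).symm f,
    Fintype.sum_prod_type, Fintype.sum_prod_type]
  have key : ∀ (x : α) (y : {u : Fin E // u ≠ v} → α) (a : α),
      Function.update ((Equiv.funSplitAt v α).symm (x, y)) v a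
        = (Equiv.funSplitAt v α).symm (a, y) := by
    intro x y a
    funext u
    by_cases hu : u = v
    · subst hu
      rw [Function.update_self, Equiv.funSplitAt_symm_apply]
      simp
    · rw [Function.update_of_ne hu, Equiv.funSplitAt_symm_apply,
        Equiv.funSplitAt_symm_apply]
      simp [hu]
  have h1 : ∀ x : α,
      (∑ y : {u : Fin E // u ≠ v} → α, ∑ a : α,
        f (Function.update ((Equiv.funSplitAt v α).symm (x, y)) v a))
      = ∑ y : {u : Fin E // u ≠ v} → α, ∑ a : α, f ((Equiv.funSplitAt v α).symm (a, y)) := by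
    intro x
    exact Finset.sum_congr rfl (fun y _ => Finset.sum_congr rfl (fun a _ => by rw [key]))
  rw [Finset.sum_congr rfl (fun x _ => h1 x), Finset.sum_const, Finset.card_univ, nsmul_eq_mul]
  congr 1
  exact Finset.sum_comm

end APDim
namespace APDim

open Finset Filter

variable {α β : Type} [Fintype α] [Fintype β] {ℓ m : ℕ}

lemma exists_fsg_succeeds_two (hα : 2 ≤ Fintype.card α) (Z : ℕ → α) :
    ∃ (m : ℕ) (G : FSG α m), G.Succeeds 2 Z := by
  have hcard : (0:ℚ) < (Fintype.card α : ℚ) := by exact_mod_cast Nat.lt_of_lt_of_le Nat.zero_lt_two hα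
  refine ⟨0, ⟨fun _ _ => 0, fun _ _ => (Fintype.card α : ℚ)⁻¹,
    fun _ _ => by positivity, fun q => ?_, 0⟩, ?_⟩
  · rw [Finset.sum_const, Finset.card_univ, nsmul_eq_mul]
    field_simp
  · set G : FSG α 0 := ⟨fun _ _ => 0, fun _ _ => (Fintype.card α : ℚ)⁻¹,
      fun _ _ => by positivity, fun q => by rw [Finset.sum_const, Finset.card_univ, nsmul_eq_mul]; field_simp, 0⟩
    have hκ : (1:ℝ) < (Fintype.card α : ℝ) := by exact_mod_cast hα.trans_lt' Nat.one_lt_two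
    have hc : ∀ n, G.capital 2 Z n = (Fintype.card α : ℝ) ^ n := by
      intro n
      induction n with
      | zero => rfl
      | succ n ih =>
          simp only [FSG.capital, ih]
          have h2 : ((Fintype.card α : ℝ)) ^ (2:ℝ) = (Fintype.card α : ℝ) ^ (2:ℕ) := by
            rw [← Real.rpow_natCast]; norm_num
          have hb : ((G.bet (G.state Z n) (Z n) : ℚ) : ℝ) = (Fintype.card α : ℝ)⁻¹ := by
            show (((Fintype.card α : ℚ)⁻¹ : ℚ) : ℝ) = _
            push_cast
            ring
          rw [h2, hb]
          field_simp
          ring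
    intro C
    have ht : Tendsto (fun n => (Fintype.card α : ℝ) ^ n) atTop atTop :=
      tendsto_pow_atTop_atTop_of_one_lt hκ
    obtain ⟨n, hn⟩ := (ht.eventually_gt_atTop C).exists
    exact ⟨n, by rw [hc]; exact hn⟩

lemma exists_fsrg_succeeds_two (hα : 2 ≤ Fintype.card α) (Y : ℕ → β) (Z : ℕ → α) :
    ∃ (ℓ' m' : ℕ) (G : FSRG α β ℓ' m'), G.Succeeds 2 Y Z := by
  obtain ⟨m', G, hG⟩ := exists_fsg_succeeds_two hα Z
  refine ⟨0, m', ⟨fun q _ a => G.δ q a, fun q _ a => G.bet q a,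
    fun q _ a => G.bet_nonneg q a, fun q _ => G.bet_sum q, G.q₀⟩, ?_⟩
  set G2 : FSRG α β 0 m' := ⟨fun q _ a => G.δ q a, fun q _ a => G.bet q a,
    fun q _ a => G.bet_nonneg q a, fun q _ => G.bet_sum q, G.q₀⟩
  have hst : ∀ n, G2.state Y Z n = G.state Z n := by
    intro n; induction n with
    | zero => rfl
    | succ n ih => simp only [FSRG.state, FSG.state, ih]; rfl
  have hcap : ∀ n, G2.capital 2 Y Z n = G.capital 2 Z n := by
    intro n; induction n with
    | zero => rfl
    | succ n ih => simp only [FSRG.capital, FSG.capital, ih, hst]; rfl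
  intro C
  obtain ⟨n, hn⟩ := hG C
  exact ⟨n, by rw [hcap]; exact hn⟩

lemma fsg_to_fsrg (G : FSG α m) (s : ℝ) (Y : ℕ → β) (Z : ℕ → α) (h : G.Succeeds s Z) :
    ∃ (G2 : FSRG α β 0 m), G2.Succeeds s Y Z := by
  refine ⟨⟨fun q _ a => G.δ q a, fun q _ a => G.bet q a,
    fun q _ a => G.bet_nonneg q a, fun q _ => G.bet_sum q, G.q₀⟩, ?_⟩
  set G2 : FSRG α β 0 m := ⟨fun q _ a => G.δ q a, fun q _ a => G.bet q a,
    fun q _ a => G.bet_nonneg q a, fun q _ => G.bet_sum q, G.q₀⟩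
  have hst : ∀ n, G2.state Y Z n = G.state Z n := by
    intro n; induction n with
    | zero => rfl
    | succ n ih => simp only [FSRG.state, FSG.state, ih]; rfl
  have hcap : ∀ n, G2.capital s Y Z n = G.capital s Z n := by
    intro n; induction n with
    | zero => rfl
    | succ n ih => simp only [FSRG.capital, FSG.capital, ih, hst]; rfl
  intro C
  obtain ⟨n, hn⟩ := h C
  exact ⟨n, by rw [hcap]; exact hn⟩

end APDim
namespace APDim

open Finset

section Main

variable {α : Type} [Fintype α] {d ℓ m : ℕ} {j : Fin d}

/-- window/buffer length `(ℓ-1+1)·d`. -/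
def EE (d ℓ : ℕ) : ℕ := (ℓ - 1 + 1) * d

lemma EE_eq : EE d ℓ = (ℓ - 1) * d + d := Nat.succ_mul _ _

lemma d_le_EE : d ≤ EE d ℓ := Nat.le_mul_of_pos_left d (Nat.succ_pos _)

lemma EE_pos (hd : 0 < d) : 0 < EE d ℓ := lt_of_lt_of_le hd d_le_EE

/-- number of positions `< n` that are `≡ jv (mod d)`. -/
def iN (d jv n : ℕ) : ℕ := n / d + if jv < n % d then 1 else 0

/-- pending-window counter. -/
def pN (d ℓ n : ℕ) : ℕ := min (n / d) (ℓ - 1)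

/-- committed step count. -/
def cN (d ℓ n : ℕ) : ℕ := n / d - pN d ℓ n

lemma divmod_succ (hd : 0 < d) (n : ℕ) :
    (n % d + 1 < d ∧ (n+1)/d = n/d ∧ (n+1) % d = n % d + 1) ∨
      (n % d + 1 = d ∧ (n+1)/d = n/d + 1 ∧ (n+1) % d = 0) := by
  have hm := Nat.div_add_mod n d
  have hr : n % d < d := Nat.mod_lt n hd
  by_cases h : n % d + 1 < d
  · left
    refine ⟨h, ?_⟩
    have := (Nat.div_mod_unique (a := n+1) (b := d) (c := n % d + 1) (d := n/d) hd).mpr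
      ⟨by omega, h⟩
    exact ⟨this.1, this.2⟩
  · right
    refine ⟨by omega, ?_⟩
    have := (Nat.div_mod_unique (a := n+1) (b := d) (c := 0) (d := n/d + 1) hd).mpr
      ⟨by rw [Nat.mul_add]; omega, hd⟩
    exact ⟨this.1, this.2⟩

lemma iN_succ (hd : 0 < d) (jv : ℕ) (hjv : jv < d) (n : ℕ) :
    iN d jv (n+1) = iN d jv n + if n % d = jv then 1 else 0 := by
  unfold iN
  rcases divmod_succ hd n with ⟨h1, h2, h3⟩ | ⟨h1, h2, h3⟩ <;> rw [h2, h3] <;>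
    split_ifs <;> omega

lemma iN_ap (hd : 0 < d) (jv : ℕ) (hjv : jv < d) (k : ℕ) :
    iN d jv (jv + k * d) = k := by
  unfold iN
  rw [Nat.add_mul_div_right _ _ hd, Nat.add_mul_mod_self_right]
  rw [Nat.div_eq_of_lt hjv, Nat.mod_eq_of_lt hjv]
  simp

lemma iN_eq (hd : 0 < d) (jv n : ℕ) :
    iN d jv n = n / d + if jv < n % d then 1 else 0 := rfl

/-- `X` patched: true below the cutoff `N`, filled by `z` on the window `[b, b+E)`. -/
def patch (X : ℕ → α) (E b N : ℕ) (z : Fin E → α) : ℕ → α := fun p =>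
  if p < N then X p else if h : p - b < E then z ⟨p - b, h⟩ else X p

lemma patch_lt (X : ℕ → α) {E b N : ℕ} (z : Fin E → α) {p : ℕ} (h : p < N) :
    patch X E b N z p = X p := if_pos h

lemma patch_self (X : ℕ → α) {E b N : ℕ} (hbN : b ≤ N) :
    patch X E b N (fun u => X (b + u.val)) = X := by
  funext p
  unfold patch
  split_ifs with h1 h2
  · rfl
  · show X (b + (p - b)) = X p
    congr 1
    omega
  · rfl

lemma patch_succ (X : ℕ → α) {E b n : ℕ} (hb : b ≤ n) (hE : n - b < E) (z : Fin E → α) :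
    patch X E b (n+1) z = patch X E b n (Function.update z ⟨n - b, hE⟩ (X n)) := by
  funext p
  unfold patch
  rcases lt_trichotomy p n with h1 | h1 | h1
  · rw [if_pos (by omega : p < n + 1), if_pos h1]
  · subst h1
    rw [if_pos (Nat.lt_succ_self p), if_neg (lt_irrefl p), dif_pos hE]
    rw [Function.update_self]
  · rw [if_neg (by omega), if_neg (by omega)]
    by_cases h3 : p - b < E
    · have hne : (⟨p - b, h3⟩ : Fin E) ≠ ⟨n - b, hE⟩ := by
        intro hc
        have := congrArg Fin.val hc
        simp only [] at this
        omega
      rw [dif_pos h3, dif_pos h3, Function.update_of_ne hne]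
    · rw [dif_neg h3, dif_neg h3]

/-- the oracle sequence determined by a full sequence `Z`. -/
def ora (j : Fin d) (Z : ℕ → α) : ℕ → ({k : Fin d // k ≠ j} → α) :=
  fun u k => Z ((k : Fin d).val + u * d)

lemma ora_eq_prodSeq (Z : ℕ → α) :
    ora j Z = prodSeq (fun k : {k : Fin d // k ≠ j} => AP Z d (k : Fin d).val) := rfl

/-- `ora` only reads positions `≢ j (mod d)`; two sequences agreeing off the `j`-class and
below a bound give the same oracle below the corresponding bound. -/
lemma ora_congr (Z1 Z2 : ℕ → α) (B : ℕ)
    (h : ∀ p, p < B * d → p % d ≠ j.val → Z1 p = Z2 p) :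
    ∀ u, u < B → ora j Z1 u = ora j Z2 u := by
  intro u hu
  funext k
  have hd : 0 < d := j.pos
  have hk : (k : Fin d).val < d := (k : Fin d).isLt
  apply h
  · calc (k : Fin d).val + u * d < d + u * d := by omega
    _ = (u + 1) * d := by ring
    _ ≤ B * d := Nat.mul_le_mul_right d (by omega)
  · rw [Nat.add_mul_mod_self_right, Nat.mod_eq_of_lt hk]
    intro hc
    exact k.2 (Fin.ext hc)

end Main

end APDim
namespace APDim

open Finset

section Main

variable {α : Type} [Fintype α] {d ℓ m : ℕ} {j : Fin d}

lemma div_mul_add_mod (n d : ℕ) : n / d * d + n % d = n := by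
  rw [Nat.mul_comm]
  exact Nat.div_add_mod n d

lemma mod_lt_EE (hd : 0 < d) (n : ℕ) : n % d < EE d ℓ :=
  lt_of_lt_of_le (Nat.mod_lt n hd) d_le_EE

/-- averaged capital, window anchored at `b`, cutoff `N`. -/
noncomputable def TA (G : FSRG α ({k : Fin d // k ≠ j} → α) ℓ m) (X : ℕ → α) (s : ℝ)
    (b N : ℕ) : ℝ :=
  ∑ z : Fin (EE d ℓ) → α,
    G.capital s (ora j (patch X (EE d ℓ) b N z)) (AP X d j.val) (iN d j.val N)

/-- averaged capital at time `n`, window anchored at the current block. -/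
noncomputable def TT (G : FSRG α ({k : Fin d // k ≠ j} → α) ℓ m) (X : ℕ → α) (s : ℝ)
    (n : ℕ) : ℝ :=
  TA G X s (n / d * d) n

/-- the patched sequence with the current position `n` set to `a`. -/
def Pfn (hd : 0 < d) (X : ℕ → α) {ℓ : ℕ} (n : ℕ) (z : Fin (EE d ℓ) → α) (a : α) : ℕ → α :=
  patch X (EE d ℓ) (n / d * d) n (Function.update z ⟨n % d, mod_lt_EE hd n⟩ a)

/-- the bet weight of symbol `a` at time `n`. -/
noncomputable def WW (G : FSRG α ({k : Fin d // k ≠ j} → α) ℓ m) (X : ℕ → α) (s : ℝ)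
    (n : ℕ) (a : α) : ℝ :=
  ∑ z : Fin (EE d ℓ) → α,
    G.capital s (ora j (Pfn j.pos X n z a)) (AP (Pfn j.pos X n z a) d j.val)
      (iN d j.val (n+1))

lemma TT_nonneg (G : FSRG α ({k : Fin d // k ≠ j} → α) ℓ m) (X : ℕ → α) (s : ℝ) (n : ℕ) :
    0 ≤ TT G X s n :=
  Finset.sum_nonneg (fun z _ => capital_nonneg _ _ _ _ _)

lemma WW_nonneg (G : FSRG α ({k : Fin d // k ≠ j} → α) ℓ m) (X : ℕ → α) (s : ℝ) (n : ℕ)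
    (a : α) : 0 ≤ WW G X s n a :=
  Finset.sum_nonneg (fun z _ => capital_nonneg _ _ _ _ _)

lemma iN_zero : iN d j.val 0 = 0 := by
  unfold iN
  simp

lemma TT_zero (G : FSRG α ({k : Fin d // k ≠ j} → α) ℓ m) (X : ℕ → α) (s : ℝ) :
    TT G X s 0 = ((Fintype.card α : ℝ)) ^ (EE d ℓ) := by
  unfold TT TA
  rw [iN_zero]
  have : ∀ z : Fin (EE d ℓ) → α,
      G.capital s (ora j (patch X (EE d ℓ) (0/d*d) 0 z)) (AP X d j.val) 0 = 1 :=
    fun z => rfl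
  rw [Finset.sum_congr rfl (fun z _ => this z), Finset.sum_const, Finset.card_univ,
    Fintype.card_fun, Fintype.card_fin, nsmul_eq_mul, mul_one]
  push_cast
  ring

lemma TT_ge (G : FSRG α ({k : Fin d // k ≠ j} → α) ℓ m) (X : ℕ → α) (s : ℝ) (n : ℕ) :
    G.capital s (ora j X) (AP X d j.val) (iN d j.val n) ≤ TT G X s n := by
  unfold TT TA
  have hz : patch X (EE d ℓ) (n/d*d) n (fun u => X (n/d*d + u.val)) = X :=
    patch_self X (Nat.div_mul_le_self n d)
  have := Finset.single_le_sum
    (f := fun z : Fin (EE d ℓ) → α =>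
      G.capital s (ora j (patch X (EE d ℓ) (n/d*d) n z)) (AP X d j.val) (iN d j.val n))
    (fun z _ => capital_nonneg _ _ _ _ _)
    (Finset.mem_univ (fun u : Fin (EE d ℓ) => X (n/d*d + u.val)))
  simpa [hz] using this

/-- positions read via `AP` below the cutoff `iN (n+1)` are `≤ n`, with equality in a
 single identified case. -/
lemma ap_read (hd : 0 < d) {jv : ℕ} (hjv : jv < d) {u n : ℕ} (hu : u < iN d jv (n+1)) :
    jv + u * d < n ∨ (jv + u * d = n ∧ n % d = jv ∧ u = n / d) := by
  have hq := div_mul_add_mod n d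
  have hr : n % d < d := Nat.mod_lt n hd
  rw [iN_succ hd jv hjv n] at hu
  unfold iN at hu
  have h1 : u * d + d = (u+1) * d := (Nat.succ_mul u d).symm
  rcases Nat.lt_or_ge u (n / d) with h | h
  · have h4 : (u+1) * d ≤ n / d * d := Nat.mul_le_mul_right d (by omega)
    left; omega
  · have hu' : u = n / d ∧ (jv < n % d ∨ n % d = jv) := by
      constructor
      · split_ifs at hu <;> omega
      · by_cases h3 : n % d = jv
        · right; exact h3
        · left
          split_ifs at hu <;> omega
    obtain ⟨rfl, h5⟩ := hu'
    rcases h5 with h5 | h5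
    · left; omega
    · right; omega

lemma Pfn_at_lt (hd : 0 < d) (X : ℕ → α) {ℓ : ℕ} (n : ℕ) (z : Fin (EE d ℓ) → α) (a : α)
    {p : ℕ} (h : p < n) : Pfn hd X n z a p = X p :=
  patch_lt _ _ h

lemma Pfn_at_n (hd : 0 < d) (X : ℕ → α) {ℓ : ℕ} (n : ℕ) (z : Fin (EE d ℓ) → α) (a : α) :
    Pfn hd X n z a n = a := by
  unfold Pfn patch
  rw [if_neg (lt_irrefl n)]
  have hb : n / d * d ≤ n := Nat.div_mul_le_self n d
  have hsub : n - n / d * d = n % d := by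
    have := div_mul_add_mod n d
    omega
  have hlt : n - n / d * d < EE d ℓ := by
    rw [hsub]; exact mod_lt_EE hd n
  rw [dif_pos hlt]
  have hidx : (⟨n - n / d * d, hlt⟩ : Fin (EE d ℓ)) = ⟨n % d, mod_lt_EE hd n⟩ :=
    Fin.ext hsub
  rw [hidx, Function.update_self]

/-- when the current position is in the `j`-class, the oracle does not see the update. -/
lemma ora_Pfn (X : ℕ → α) (n : ℕ) (hr : n % d = j.val) (z : Fin (EE d ℓ) → α) (a : α) :
    ora j (Pfn j.pos X n z a) = ora j (patch X (EE d ℓ) (n / d * d) n z) := by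
  funext u k
  have hd : 0 < d := j.pos
  have hkd : (k : Fin d).val < d := (k : Fin d).isLt
  show Pfn j.pos X n z a ((k : Fin d).val + u * d)
      = patch X (EE d ℓ) (n / d * d) n z ((k : Fin d).val + u * d)
  have hne : (k : Fin d).val + u * d ≠ n := by
    intro hc
    have h1 : ((k : Fin d).val + u * d) % d = (k : Fin d).val := by
      rw [Nat.add_mul_mod_self_right, Nat.mod_eq_of_lt hkd]
    rw [hc, hr] at h1
    exact k.2 (Fin.ext h1.symm)
  set P := (k : Fin d).val + u * d with hP
  unfold Pfn patch
  by_cases h1 : P < n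
  · rw [if_pos h1, if_pos h1]
  · rw [if_neg h1, if_neg h1]
    by_cases h2 : P - n / d * d < EE d ℓ
    · rw [dif_pos h2, dif_pos h2]
      apply Function.update_of_ne
      intro hc
      have hv := congrArg Fin.val hc
      simp only [] at hv
      have hb : n / d * d ≤ n := Nat.div_mul_le_self n d
      have := div_mul_add_mod n d
      omega
    · rw [dif_neg h2, dif_neg h2]

end Main

end APDim
namespace APDim

open Finset

section Main

variable {α : Type} [Fintype α] {d ℓ m : ℕ} {j : Fin d}

lemma avg_anchor (X : ℕ → α) (F : (ℕ → α) → ℝ) (N M K b₁ b₂ : ℕ)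
    (hb₁ : b₁ ≤ N) (hb₂ : b₂ ≤ N) (hN₁ : N ≤ b₁ + K) (hN₂ : N ≤ b₂ + K)
    (hM₁ : M ≤ b₁ + K) (hM₂ : M ≤ b₂ + K)
    (hF : ∀ g h : ℕ → α, (∀ p, p < M → g p = h p) → F g = F h) :
    ∑ z : Fin K → α, F (patch X K b₁ N z) = ∑ z : Fin K → α, F (patch X K b₂ N z) := by
  have key : ∀ b, b ≤ N → N ≤ b + K → M ≤ b + K →
      ∑ z : Fin K → α, F (patch X K b N z)
        = (Fintype.card α : ℝ) ^ (K - (max M N - N)) *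
            ∑ w : Fin (max M N - N) → α, F (patch X (max M N - N) N N w) := by
    intro b hb hN hM
    have hemb : ∀ u : Fin (max M N - N), N - b + u.val < K := by
      intro u; have := u.isLt; omega
    have hinj : Function.Injective (fun u : Fin (max M N - N) => (⟨N - b + u.val, hemb u⟩ : Fin K)) := by
      intro u v huv
      rw [Fin.mk.injEq] at huv
      exact Fin.ext (by omega)
    have hpt : ∀ z : Fin K → α,
        F (patch X K b N z)
          = F (patch X (max M N - N) N N
              (fun u => z ⟨N - b + u.val, hemb u⟩)) := by
      intro z
      apply hF
      intro p hp
      by_cases h1 : p < N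
      · rw [patch_lt _ _ h1, patch_lt _ _ h1]
      · unfold patch
        rw [if_neg h1, if_neg h1]
        have h2 : p - b < K := by omega
        have h3 : p - N < max M N - N := by omega
        rw [dif_pos h2, dif_pos h3]
        congr 1
        simp only [Fin.mk.injEq]
        omega
    rw [Finset.sum_congr rfl (fun z _ => hpt z)]
    exact sum_comp_emb _ hinj (fun w => F (patch X (max M N - N) N N w))
  rw [key b₁ hb₁ hN₁ hM₁, key b₂ hb₂ hN₂ hM₂]

lemma iN_succ_le (hd : 0 < d) {jv : ℕ} (n : ℕ) : iN d jv (n+1) ≤ n / d + 1 := by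
  by_cases hjv : jv < d
  · rw [iN_succ hd jv hjv n]
    unfold iN
    have : n % d < d := Nat.mod_lt n hd
    split_ifs <;> omega
  · unfold iN
    rcases divmod_succ hd n with ⟨h1, h2, h3⟩ | ⟨h1, h2, h3⟩ <;> rw [h2, h3] <;>
      split_ifs <;> omega

/-- the capital at cutoff `N` only depends on the sequence below `(iN N + (ℓ-1))·d`. -/
lemma cap_depends (G : FSRG α ({k : Fin d // k ≠ j} → α) ℓ m) (X : ℕ → α) (s : ℝ) (N : ℕ)
    (g h : ℕ → α) (hgh : ∀ p, p < (iN d j.val N + (ℓ - 1)) * d → g p = h p) :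
    G.capital s (ora j g) (AP X d j.val) (iN d j.val N)
      = G.capital s (ora j h) (AP X d j.val) (iN d j.val N) := by
  apply capital_congr
  · intro u hu
    refine ora_congr g h (iN d j.val N + (ℓ - 1)) (fun p hp _ => hgh p hp) u (by omega)
  · intro u _; rfl

lemma TT_reanchor (G : FSRG α ({k : Fin d // k ≠ j} → α) ℓ m) (X : ℕ → α) (s : ℝ) (n : ℕ) :
    TA G X s (n / d * d) (n+1) = TT G X s (n+1) := by
  have hd : 0 < d := j.pos
  unfold TT
  by_cases hq : (n+1) / d = n / d
  · rw [hq]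
  · unfold TA
    have hq1 := div_mul_add_mod n d
    have hq2 := div_mul_add_mod (n+1) d
    have hr1 : n % d < d := Nat.mod_lt n hd
    have hr2 : (n+1) % d < d := Nat.mod_lt (n+1) hd
    have hdiv : n / d ≤ (n+1) / d := Nat.div_le_div_right (by omega)
    have hdm : n / d * d ≤ (n+1) / d * d := Nat.mul_le_mul_right d hdiv
    have hEEe : EE d ℓ = (ℓ - 1) * d + d := EE_eq
    have hiNb : iN d j.val (n+1) ≤ n / d + 1 := iN_succ_le hd n
    have hM1 : (iN d j.val (n+1) + (ℓ - 1)) * d ≤ n / d * d + EE d ℓ := by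
      have h1 : (iN d j.val (n+1) + (ℓ - 1)) * d ≤ (n / d + 1 + (ℓ - 1)) * d :=
        Nat.mul_le_mul_right d (by omega)
      have h2 : (n / d + 1 + (ℓ - 1)) * d = n / d * d + d + (ℓ - 1) * d := by ring
      omega
    have hdm2 : (n+1) / d * d ≤ n + 1 := Nat.div_mul_le_self (n+1) d
    apply avg_anchor X
      (fun g => G.capital s (ora j g) (AP X d j.val) (iN d j.val (n+1)))
      (n+1) ((iN d j.val (n+1) + (ℓ - 1)) * d) (EE d ℓ) (n / d * d) ((n+1) / d * d)
      (by omega) (by omega) (by omega) (by omega) (by omega) (by omega)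
      (fun g h hgh => cap_depends G X s (n+1) g h hgh)

lemma W_step (G : FSRG α ({k : Fin d // k ≠ j} → α) ℓ m) (X : ℕ → α) (s : ℝ) (n : ℕ) :
    TA G X s (n / d * d) (n+1) = WW G X s n (X n) := by
  unfold TA WW
  apply Finset.sum_congr rfl
  intro z _
  have hd : 0 < d := j.pos
  have hb : n / d * d ≤ n := Nat.div_mul_le_self n d
  have hq := div_mul_add_mod n d
  have hr : n % d < d := Nat.mod_lt n hd
  have hE : n - n / d * d < EE d ℓ := by
    have := mod_lt_EE (ℓ := ℓ) hd n
    omega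
  rw [patch_succ X hb hE z]
  have hidx : (⟨n - n / d * d, hE⟩ : Fin (EE d ℓ)) = ⟨n % d, mod_lt_EE hd n⟩ :=
    Fin.ext (show n - n / d * d = n % d by omega)
  rw [hidx]
  show G.capital s (ora j (Pfn j.pos X n z (X n))) (AP X d j.val) (iN d j.val (n+1)) = _
  apply capital_congr
  · intro u _; rfl
  · intro u hu
    show X (j.val + u * d) = Pfn j.pos X n z (X n) (j.val + u * d)
    rcases ap_read hd j.isLt hu with h | ⟨h, _, _⟩
    · rw [Pfn_at_lt hd X n z (X n) h]
    · rw [h, Pfn_at_n]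

lemma iN_eq_div (n : ℕ) (hr : n % d = j.val) : iN d j.val n = n / d := by
  unfold iN
  rw [hr]
  simp

lemma W_sum_j (G : FSRG α ({k : Fin d // k ≠ j} → α) ℓ m) (X : ℕ → α) (s : ℝ) (n : ℕ)
    (hr : n % d = j.val) :
    ∑ a : α, WW G X s n a = (Fintype.card α : ℝ) ^ s * TT G X s n := by
  have hd : 0 < d := j.pos
  have hq := div_mul_add_mod n d
  have hiN : iN d j.val (n+1) = iN d j.val n + 1 := by
    rw [iN_succ hd j.val j.isLt n, if_pos hr]
  have hiNd : iN d j.val n = n / d := iN_eq_div n hr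
  unfold WW TT TA
  rw [Finset.sum_comm, Finset.mul_sum]
  apply Finset.sum_congr rfl
  intro z _
  have hora : ∀ a : α, ora j (Pfn j.pos X n z a)
      = ora j (patch X (EE d ℓ) (n / d * d) n z) := fun a => ora_Pfn X n hr z a
  have hcapc : ∀ a : α,
      G.capital s (ora j (Pfn j.pos X n z a)) (AP (Pfn j.pos X n z a) d j.val) (iN d j.val n)
      = G.capital s (ora j (patch X (EE d ℓ) (n / d * d) n z)) (AP X d j.val)
          (iN d j.val n) := by
    intro a
    rw [hora a]
    apply capital_congr
    · intro u _; rfl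
    · intro u hu
      show Pfn j.pos X n z a (j.val + u * d) = X (j.val + u * d)
      rcases ap_read hd j.isLt (by omega : u < iN d j.val (n+1)) with h | ⟨h, _, hu2⟩
      · rw [Pfn_at_lt hd X n z a h]
      · omega
  have hstc : ∀ a : α,
      G.state (ora j (Pfn j.pos X n z a)) (AP (Pfn j.pos X n z a) d j.val) (iN d j.val n)
      = G.state (ora j (patch X (EE d ℓ) (n / d * d) n z)) (AP X d j.val)
          (iN d j.val n) := by
    intro a
    rw [hora a]
    apply state_congr
    · intro u _; rfl
    · intro u hu
      show Pfn j.pos X n z a (j.val + u * d) = X (j.val + u * d)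
      rcases ap_read hd j.isLt (by omega : u < iN d j.val (n+1)) with h | ⟨h, _, hu2⟩
      · rw [Pfn_at_lt hd X n z a h]
      · omega
  have hAPa : ∀ a : α, AP (Pfn j.pos X n z a) d j.val (iN d j.val n) = a := by
    intro a
    show Pfn j.pos X n z a (j.val + iN d j.val n * d) = a
    have hpos : j.val + iN d j.val n * d = n := by rw [hiNd]; omega
    rw [hpos, Pfn_at_n]
  have hterm : ∀ a : α,
      G.capital s (ora j (Pfn j.pos X n z a)) (AP (Pfn j.pos X n z a) d j.val)
          (iN d j.val (n+1))
      = (Fintype.card α : ℝ) ^ s *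
        ((G.bet (G.state (ora j (patch X (EE d ℓ) (n / d * d) n z)) (AP X d j.val)
            (iN d j.val n))
          (fun τ => ora j (patch X (EE d ℓ) (n / d * d) n z) (iN d j.val n + τ.val)) a : ℚ) : ℝ) *
        G.capital s (ora j (patch X (EE d ℓ) (n / d * d) n z)) (AP X d j.val)
          (iN d j.val n) := by
    intro a
    rw [hiN]
    simp only [FSRG.capital]
    rw [hstc a, hAPa a, hcapc a, hora a]
  rw [Finset.sum_congr rfl (fun a _ => hterm a)]
  have hbetsR : (∑ a : α,
      ((G.bet (G.state (ora j (patch X (EE d ℓ) (n / d * d) n z)) (AP X d j.val)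
          (iN d j.val n))
        (fun τ => ora j (patch X (EE d ℓ) (n / d * d) n z) (iN d j.val n + τ.val)) a : ℚ) : ℝ))
        = (1:ℝ) := by
    exact_mod_cast G.bet_sum (G.state (ora j (patch X (EE d ℓ) (n / d * d) n z)) (AP X d j.val)
          (iN d j.val n))
        (fun τ => ora j (patch X (EE d ℓ) (n / d * d) n z) (iN d j.val n + τ.val))
  rw [← Finset.sum_mul, ← Finset.mul_sum, hbetsR, mul_one]

lemma W_sum_nj (G : FSRG α ({k : Fin d // k ≠ j} → α) ℓ m) (X : ℕ → α) (s : ℝ) (n : ℕ)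
    (hr : n % d ≠ j.val) :
    ∑ a : α, WW G X s n a = (Fintype.card α : ℝ) * TT G X s n := by
  have hd : 0 < d := j.pos
  have hiN : iN d j.val (n+1) = iN d j.val n := by
    rw [iN_succ hd j.val j.isLt n, if_neg hr]
    omega
  unfold WW TT TA
  rw [Finset.sum_comm]
  have hterm : ∀ (z : Fin (EE d ℓ) → α) (a : α),
      G.capital s (ora j (Pfn j.pos X n z a)) (AP (Pfn j.pos X n z a) d j.val)
          (iN d j.val (n+1))
      = (fun w : Fin (EE d ℓ) → α =>
          G.capital s (ora j (patch X (EE d ℓ) (n / d * d) n w)) (AP X d j.val)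
            (iN d j.val n)) (Function.update z ⟨n % d, mod_lt_EE hd n⟩ a) := by
    intro z a
    rw [hiN]
    apply capital_congr
    · intro u _; rfl
    · intro u hu
      show Pfn j.pos X n z a (j.val + u * d) = X (j.val + u * d)
      rcases ap_read hd j.isLt (by omega : u < iN d j.val (n+1)) with h | ⟨h, h2, _⟩
      · rw [Pfn_at_lt hd X n z a h]
      · exact absurd h2 hr
  rw [Finset.sum_congr rfl (fun z _ =>
    Finset.sum_congr rfl (fun a _ => hterm z a))]
  exact update_sum (⟨n % d, mod_lt_EE hd n⟩ : Fin (EE d ℓ))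
    (fun w : Fin (EE d ℓ) → α =>
      G.capital s (ora j (patch X (EE d ℓ) (n / d * d) n w)) (AP X d j.val) (iN d j.val n))

end Main

end APDim
namespace APDim

open Finset

section Machine

variable {α : Type} [Fintype α] {d ℓ m : ℕ} {j : Fin d}

/-- machine state space: (delayed G-state, buffer, position mod d, pending counter). -/
abbrev MS (α : Type) (d ℓ m : ℕ) : Type :=
  Fin (m+1) × (Fin (EE d ℓ) → α) × Fin d × Fin (ℓ - 1 + 1)

lemma win_lt_EE {k τ : ℕ} (hk : k < d) (hτ : τ < ℓ) : k + τ * d < EE d ℓ := by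
  have h1 : τ * d ≤ (ℓ - 1) * d := Nat.mul_le_mul_right d (by omega)
  have h2 : EE d ℓ = (ℓ - 1) * d + d := EE_eq
  omega

lemma j_lt_EE (j : Fin d) : j.val < EE d ℓ := lt_of_lt_of_le j.isLt d_le_EE

/-- relative environment seen by the machine: buffer for the known part, current symbol `a`,
and `z` for the unknown future. -/
def env (E dd : ℕ) (buf : Fin E → α) (rr pp : ℕ) (z : Fin E → α) (a : α) : ℕ → α :=
  fun relp =>
    if h1 : relp < pp * dd + rr then
      (if h2 : relp + E - (pp * dd + rr) < E then buf ⟨relp + E - (pp * dd + rr), h2⟩ else a)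
    else if relp = pp * dd + rr then a
    else if h3 : relp - pp * dd < E then z ⟨relp - pp * dd, h3⟩ else a

/-- number of bet factors the machine multiplies at offset `rr`, pending count `pp`. -/
def cntOf (jv rr pp : ℕ) : ℕ := pp + if jv ≤ rr then 1 else 0

/-- machine bet weight. -/
def wQmach (G : FSRG α ({k : Fin d // k ≠ j} → α) ℓ m) (q : Fin (m+1))
    (buf : Fin (EE d ℓ) → α) (rr pp : ℕ) (a : α) : ℚ :=
  ∑ z : Fin (EE d ℓ) → α,
    prodBets G q (ora j (env (EE d ℓ) d buf rr pp z a))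
      (AP (env (EE d ℓ) d buf rr pp z a) d j.val) (cntOf j.val rr pp)

lemma wQmach_nonneg (G : FSRG α ({k : Fin d // k ≠ j} → α) ℓ m) (q : Fin (m+1))
    (buf : Fin (EE d ℓ) → α) (rr pp : ℕ) (a : α) : 0 ≤ wQmach G q buf rr pp a :=
  Finset.sum_nonneg (fun z _ => prodBets_nonneg _ _ _ _ _)

/-- machine bet function. -/
def betS (G : FSRG α ({k : Fin d // k ≠ j} → α) ℓ m) (st : MS α d ℓ m) (a : α) : ℚ :=
  if (∑ a' : α, wQmach G st.1 st.2.1 st.2.2.1.val st.2.2.2.val a') = 0 then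
    (Fintype.card α : ℚ)⁻¹
  else
    wQmach G st.1 st.2.1 st.2.2.1.val st.2.2.2.val a /
      ∑ a' : α, wQmach G st.1 st.2.1 st.2.2.1.val st.2.2.2.val a'

lemma betS_nonneg (G : FSRG α ({k : Fin d // k ≠ j} → α) ℓ m) (st : MS α d ℓ m) (a : α) :
    0 ≤ betS G st a := by
  unfold betS
  split_ifs with h
  · positivity
  · exact div_nonneg (wQmach_nonneg _ _ _ _ _ _)
      (Finset.sum_nonneg (fun a' _ => wQmach_nonneg _ _ _ _ _ _))

lemma betS_sum (hcard : 0 < Fintype.card α) (G : FSRG α ({k : Fin d // k ≠ j} → α) ℓ m)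
    (st : MS α d ℓ m) : ∑ a : α, betS G st a = 1 := by
  unfold betS
  split_ifs with h
  · rw [Finset.sum_const, Finset.card_univ, nsmul_eq_mul]
    have : (Fintype.card α : ℚ) ≠ 0 := Nat.cast_ne_zero.mpr (by omega)
    field_simp
  · rw [← Finset.sum_div, div_self h]

/-- machine transition. -/
def δS (G : FSRG α ({k : Fin d // k ≠ j} → α) ℓ m) : MS α d ℓ m → α → MS α d ℓ m :=
  fun st a =>
    let buf' : Fin (EE d ℓ) → α :=
      fun t => if h : t.val + 1 < EE d ℓ then st.2.1 ⟨t.val + 1, h⟩ else a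
    if h : st.2.2.1.val + 1 < d then (st.1, buf', ⟨st.2.2.1.val + 1, h⟩, st.2.2.2)
    else if h2 : st.2.2.2.val < ℓ - 1 then
      (st.1, buf', ⟨0, st.2.2.1.pos⟩, ⟨st.2.2.2.val + 1, by omega⟩)
    else
      (G.δ st.1
        (fun τ k => buf' ⟨(k : Fin d).val + τ.val * d, win_lt_EE (k : Fin d).isLt τ.isLt⟩)
        (buf' ⟨j.val, j_lt_EE j⟩), buf', ⟨0, st.2.2.1.pos⟩, st.2.2.2)

/-- machine start state. -/
def q0S (G : FSRG α ({k : Fin d // k ≠ j} → α) ℓ m) (X : ℕ → α) : MS α d ℓ m :=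
  (G.q₀, fun _ => X 0, ⟨0, j.pos⟩, ⟨0, Nat.succ_pos _⟩)

/-- machine run. -/
def staS (G : FSRG α ({k : Fin d // k ≠ j} → α) ℓ m) (X : ℕ → α) : ℕ → MS α d ℓ m
  | 0 => q0S G X
  | n+1 => δS G (staS G X n) (X n)

/-- buffer contents at time `n`. -/
def bufX (X : ℕ → α) (E n : ℕ) : Fin E → α := fun t => X (n + t.val - E)

lemma buf_shift (X : ℕ → α) (n : ℕ) :
    (fun t : Fin (EE d ℓ) =>
      if h : t.val + 1 < EE d ℓ then bufX X (EE d ℓ) n ⟨t.val + 1, h⟩ else X n)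
    = bufX X (EE d ℓ) (n+1) := by
  funext t
  have ht := t.isLt
  unfold bufX
  split_ifs with h
  · show X (n + (t.val + 1) - EE d ℓ) = X (n + 1 + t.val - EE d ℓ)
    congr 1
    omega
  · congr 1
    omega

theorem staS_eq (G : FSRG α ({k : Fin d // k ≠ j} → α) ℓ m) (X : ℕ → α) (n : ℕ) :
    staS G X n = (G.state (ora j X) (AP X d j.val) (cN d ℓ n),
      bufX X (EE d ℓ) n, ⟨n % d, Nat.mod_lt n j.pos⟩,
      ⟨pN d ℓ n, by unfold pN; omega⟩) := by
  have hd : 0 < d := j.pos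
  induction n with
  | zero =>
      show q0S G X = _
      unfold q0S
      have h1 : cN d ℓ 0 = 0 := by unfold cN pN; simp
      have h2 : pN d ℓ 0 = 0 := by unfold pN; simp
      simp only [Prod.mk.injEq]
      refine ⟨by rw [h1]; rfl, ?_, Fin.ext (by simp), Fin.ext (by simp [h2])⟩
      funext t
      unfold bufX
      congr 1
      have := t.isLt
      omega
  | succ n ih =>
      show δS G (staS G X n) (X n) = _
      rw [ih]
      have hq := div_mul_add_mod n d
      have hrlt : n % d < d := Nat.mod_lt n hd
      unfold δS
      simp only []
      rw [buf_shift X n]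
      rcases divmod_succ hd n with ⟨h1, h2, h3⟩ | ⟨h1, h2, h3⟩
      · -- within a block
        rw [dif_pos h1]
        have hcN : cN d ℓ (n+1) = cN d ℓ n := by unfold cN pN; rw [h2]
        have hpN : pN d ℓ (n+1) = pN d ℓ n := by unfold pN; rw [h2]
        simp only [Prod.mk.injEq]
        exact ⟨by rw [hcN], trivial, Fin.ext (by simp [h3]), Fin.ext (by simp [hpN])⟩
      · -- block boundary
        rw [dif_neg (by omega)]
        by_cases hp : pN d ℓ n < ℓ - 1
        · -- initial phase
          have hpblk : pN d ℓ n = n / d := by unfold pN at hp ⊢; omega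
          rw [dif_pos hp]
          have hcN : cN d ℓ (n+1) = cN d ℓ n := by unfold cN pN at *; rw [h2]; omega
          have hpN : pN d ℓ (n+1) = pN d ℓ n + 1 := by unfold pN at *; rw [h2]; omega
          simp only [Prod.mk.injEq]
          exact ⟨by rw [hcN], trivial, Fin.ext (by simp [h3]), Fin.ext (by simp [hpN])⟩
        · -- steady state: commit one step of G
          have hpval : pN d ℓ n = ℓ - 1 := by unfold pN at *; omega
          have hblk : ℓ - 1 ≤ n / d := by unfold pN at hpval; omega
          rw [dif_neg hp]
          have hcN : cN d ℓ (n+1) = cN d ℓ n + 1 := by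
            unfold cN pN at *; rw [h2]; omega
          have hpN : pN d ℓ (n+1) = pN d ℓ n := by unfold pN at *; rw [h2]; omega
          have hn1E : EE d ℓ ≤ n + 1 := by
            have hE : EE d ℓ = (ℓ - 1) * d + d := EE_eq
            have h4 : (ℓ - 1) * d ≤ n / d * d := Nat.mul_le_mul_right d hblk
            omega
          have hcNd : cN d ℓ n * d = n / d * d - (ℓ - 1) * d := by
            unfold cN
            rw [hpval, Nat.sub_mul]
          have hld : (ℓ - 1) * d ≤ n / d * d := Nat.mul_le_mul_right d hblk
          have hEe : EE d ℓ = (ℓ - 1) * d + d := EE_eq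
          simp only [Prod.mk.injEq]
          refine ⟨?_, trivial, Fin.ext (by simp [h3]), Fin.ext (by simp [hpN])⟩
          rw [hcN]
          show G.δ _ _ _ = G.state (ora j X) (AP X d j.val) (cN d ℓ n + 1)
          simp only [FSRG.state]
          congr 1
          · -- windows agree
            funext τ
            funext k
            show (if h : (k : Fin d).val + τ.val * d + 1 < EE d ℓ then
                bufX X (EE d ℓ) n ⟨(k : Fin d).val + τ.val * d + 1, h⟩ else X n)
              = X ((k : Fin d).val + (cN d ℓ n + τ.val) * d)
            have hk := (k : Fin d).isLt
            have hτ := τ.isLt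
            have h5 : τ.val * d ≤ (ℓ - 1) * d := Nat.mul_le_mul_right d (by omega)
            have h6 : (cN d ℓ n + τ.val) * d = cN d ℓ n * d + τ.val * d := Nat.add_mul _ _ _
            split_ifs with hcase
            · show X (n + ((k : Fin d).val + τ.val * d + 1) - EE d ℓ) = _
              congr 1
              omega
            · congr 1
              omega
          · -- bet symbol agrees
            show (if h : j.val + 1 < EE d ℓ then bufX X (EE d ℓ) n ⟨j.val + 1, h⟩ else X n)
              = X (j.val + cN d ℓ n * d)
            have hj := j.isLt
            split_ifs with hcase
            · show X (n + (j.val + 1) - EE d ℓ) = _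
              congr 1
              omega
            · congr 1
              omega

end Machine

end APDim
namespace APDim

open Finset

section Match

variable {α : Type} [Fintype α] {d ℓ m : ℕ} {j : Fin d}

lemma iN_split (n : ℕ) :
    iN d j.val (n+1) = cN d ℓ n + cntOf j.val (n % d) (pN d ℓ n) := by
  rw [iN_succ j.pos j.val j.isLt n]
  unfold iN cntOf cN pN
  have := Nat.mod_lt n j.pos
  have := j.isLt
  split_ifs <;> omega

lemma head_bound (n : ℕ) : cN d ℓ n + ℓ - 1 ≤ n / d ∨ cN d ℓ n = 0 := by
  unfold cN pN
  omega

lemma head_cap (G : FSRG α ({k : Fin d // k ≠ j} → α) ℓ m) (X : ℕ → α) (s : ℝ) (n : ℕ)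
    (z : Fin (EE d ℓ) → α) (a : α) :
    G.capital s (ora j (Pfn j.pos X n z a)) (AP (Pfn j.pos X n z a) d j.val) (cN d ℓ n)
      = G.capital s (ora j X) (AP X d j.val) (cN d ℓ n) ∧
    G.state (ora j (Pfn j.pos X n z a)) (AP (Pfn j.pos X n z a) d j.val) (cN d ℓ n)
      = G.state (ora j X) (AP X d j.val) (cN d ℓ n) := by
  have hd : 0 < d := j.pos
  by_cases hc0 : cN d ℓ n = 0
  · rw [hc0]
    exact ⟨rfl, rfl⟩
  · have hcle : cN d ℓ n + ℓ - 1 ≤ n / d := by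
      rcases head_bound (ℓ := ℓ) n with h | h
      · exact h
      · exact absurd h hc0
    have hdm : n / d * d ≤ n := Nat.div_mul_le_self n d
    have hY : ∀ u, u + 2 ≤ cN d ℓ n + ℓ →
        ora j (Pfn j.pos X n z a) u = ora j X u := by
      intro u hu
      funext k
      show Pfn j.pos X n z a ((k : Fin d).val + u * d) = X ((k : Fin d).val + u * d)
      apply Pfn_at_lt
      have hk := (k : Fin d).isLt
      have h1 : (u + 1) * d ≤ (cN d ℓ n + ℓ - 1) * d := Nat.mul_le_mul_right d (by omega)
      have h2 : (cN d ℓ n + ℓ - 1) * d ≤ n / d * d := Nat.mul_le_mul_right d hcle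
      have h3 : (u+1) * d = u * d + d := Nat.succ_mul _ _
      omega
    have hA : ∀ u, u < cN d ℓ n →
        AP (Pfn j.pos X n z a) d j.val u = AP X d j.val u := by
      intro u hu
      show Pfn j.pos X n z a (j.val + u * d) = X (j.val + u * d)
      apply Pfn_at_lt
      have hj := j.isLt
      have hcle2 : cN d ℓ n ≤ n / d := by unfold cN; omega
      have h1 : (u + 1) * d ≤ cN d ℓ n * d := Nat.mul_le_mul_right d (by omega)
      have h2 : cN d ℓ n * d ≤ n / d * d := Nat.mul_le_mul_right d hcle2
      have h3 : (u+1) * d = u * d + d := Nat.succ_mul _ _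
      omega
    exact ⟨capital_congr G s _ _ _ _ _ hY hA, state_congr G _ _ _ _ _ hY hA⟩

/-- the machine environment agrees with the semantic patched sequence, relative to `cN·d`. -/
lemma env_agree (X : ℕ → α) (n : ℕ) (z : Fin (EE d ℓ) → α) (a : α) :
    ∀ relp, relp < pN d ℓ n * d + EE d ℓ →
      env (EE d ℓ) d (bufX X (EE d ℓ) n) (n % d) (pN d ℓ n) z a relp
        = Pfn j.pos X n z a (cN d ℓ n * d + relp) := by
  intro relp hrelp
  have hd : 0 < d := j.pos
  have hq := div_mul_add_mod n d
  have hr : n % d < d := Nat.mod_lt n hd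
  have hple : pN d ℓ n ≤ n / d := Nat.min_le_left _ _
  have hple2 : pN d ℓ n ≤ ℓ - 1 := Nat.min_le_right _ _
  have hpd : pN d ℓ n * d ≤ n / d * d := Nat.mul_le_mul_right d hple
  have hpd2 : pN d ℓ n * d ≤ (ℓ - 1) * d := Nat.mul_le_mul_right d hple2
  have hcd : cN d ℓ n * d = n / d * d - pN d ℓ n * d := by
    unfold cN
    rw [Nat.sub_mul]
  have hEe : EE d ℓ = (ℓ - 1) * d + d := EE_eq
  unfold env
  split_ifs with h1 h2 h3 h4
  · -- known region, valid buffer index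
    unfold bufX
    show X (n + (relp + EE d ℓ - (pN d ℓ n * d + n % d)) - EE d ℓ) = _
    rw [Pfn_at_lt hd X n z a (by omega)]
    congr 1
    omega
  · -- known region, buffer index out of range: impossible
    omega
  · -- current position
    rw [show cN d ℓ n * d + relp = n by omega, Pfn_at_n]
  · -- future region, within the window
    show z ⟨relp - pN d ℓ n * d, h4⟩ = Pfn j.pos X n z a (cN d ℓ n * d + relp)
    unfold Pfn patch
    rw [if_neg (by omega : ¬ cN d ℓ n * d + relp < n)]
    have h5 : cN d ℓ n * d + relp - n / d * d < EE d ℓ := by omega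
    rw [dif_pos h5]
    rw [Function.update_of_ne]
    · congr 1
      exact Fin.ext (show relp - pN d ℓ n * d = cN d ℓ n * d + relp - n / d * d by omega)
    · intro hc
      have hv : cN d ℓ n * d + relp - n / d * d = n % d := congrArg Fin.val hc
      omega
  · -- future region, outside the window: impossible
    omega

lemma cap_factor (G : FSRG α ({k : Fin d // k ≠ j} → α) ℓ m) (X : ℕ → α) (s : ℝ) (n : ℕ)
    (z : Fin (EE d ℓ) → α) (a : α) :
    G.capital s (ora j (Pfn j.pos X n z a)) (AP (Pfn j.pos X n z a) d j.val)
        (iN d j.val (n+1))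
      = G.capital s (ora j X) (AP X d j.val) (cN d ℓ n) *
        ((Fintype.card α : ℝ) ^ s) ^ (cntOf j.val (n % d) (pN d ℓ n)) *
        ((prodBets G (G.state (ora j X) (AP X d j.val) (cN d ℓ n))
            (ora j (env (EE d ℓ) d (bufX X (EE d ℓ) n) (n % d) (pN d ℓ n) z a))
            (AP (env (EE d ℓ) d (bufX X (EE d ℓ) n) (n % d) (pN d ℓ n) z a) d j.val)
            (cntOf j.val (n % d) (pN d ℓ n)) : ℚ) : ℝ) := by
  have hd : 0 < d := j.pos
  have hr : n % d < d := Nat.mod_lt n hd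
  have hcnt : cntOf j.val (n % d) (pN d ℓ n) ≤ pN d ℓ n + 1 := by
    unfold cntOf; split_ifs <;> omega
  rw [iN_split (ℓ := ℓ) n]
  rw [capital_run G s _ _ (cN d ℓ n) (cntOf j.val (n % d) (pN d ℓ n))]
  rw [(head_cap G X s n z a).1, (head_cap G X s n z a).2]
  congr 1
  congr 1
  apply prodBets_congr
  · -- oracle windows agree
    intro u hu
    funext k
    have hk := (k : Fin d).isLt
    have hple2 : pN d ℓ n ≤ ℓ - 1 := Nat.min_le_right _ _
    have hEe : EE d ℓ = (ℓ - 1) * d + d := EE_eq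
    have hub : u ≤ pN d ℓ n + ℓ - 1 := by omega
    have hum : u * d ≤ (pN d ℓ n + ℓ - 1) * d := Nat.mul_le_mul_right d hub
    have hsm : (pN d ℓ n + ℓ - 1) * d ≤ pN d ℓ n * d + (ℓ - 1) * d := by
      have h7 : pN d ℓ n + ℓ - 1 ≤ pN d ℓ n + (ℓ - 1) := by omega
      calc (pN d ℓ n + ℓ - 1) * d ≤ (pN d ℓ n + (ℓ - 1)) * d := Nat.mul_le_mul_right d h7
        _ = pN d ℓ n * d + (ℓ - 1) * d := Nat.add_mul _ _ _
    have hrel : (k : Fin d).val + u * d < pN d ℓ n * d + EE d ℓ := by omega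
    show Pfn j.pos X n z a ((k : Fin d).val + (cN d ℓ n + u) * d)
        = env (EE d ℓ) d (bufX X (EE d ℓ) n) (n % d) (pN d ℓ n) z a ((k : Fin d).val + u * d)
    rw [env_agree (j := j) X n z a ((k : Fin d).val + u * d) hrel]
    exact congrArg (Pfn j.pos X n z a) (by
      have h8 := Nat.add_mul (cN d ℓ n) u d
      omega)
  · -- bet symbols agree
    intro u hu
    have hj := j.isLt
    have hum : u * d ≤ pN d ℓ n * d := Nat.mul_le_mul_right d (by omega)
    have hEpos : 0 < EE d ℓ := EE_pos hd
    have hrel : j.val + u * d < pN d ℓ n * d + EE d ℓ := by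
      have := d_le_EE (d := d) (ℓ := ℓ)
      omega
    show Pfn j.pos X n z a (j.val + (cN d ℓ n + u) * d)
        = env (EE d ℓ) d (bufX X (EE d ℓ) n) (n % d) (pN d ℓ n) z a (j.val + u * d)
    rw [env_agree (j := j) X n z a (j.val + u * d) hrel]
    exact congrArg (Pfn j.pos X n z a) (by
      have h8 := Nat.add_mul (cN d ℓ n) u d
      omega)

lemma W_match (G : FSRG α ({k : Fin d // k ≠ j} → α) ℓ m) (X : ℕ → α) (s : ℝ) (n : ℕ)
    (a : α) :
    WW G X s n a
      = G.capital s (ora j X) (AP X d j.val) (cN d ℓ n) *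
        ((Fintype.card α : ℝ) ^ s) ^ (cntOf j.val (n % d) (pN d ℓ n)) *
        ((wQmach G (G.state (ora j X) (AP X d j.val) (cN d ℓ n)) (bufX X (EE d ℓ) n)
            (n % d) (pN d ℓ n) a : ℚ) : ℝ) := by
  unfold WW wQmach
  push_cast
  rw [Finset.mul_sum]
  exact Finset.sum_congr rfl (fun z _ => cap_factor G X s n z a)

end Match

end APDim
namespace APDim

open Finset

section Sim

variable {α : Type} [Fintype α] {d ℓ m : ℕ} {j : Fin d}

def mC (α : Type) [Fintype α] (d ℓ m : ℕ) : ℕ := Fintype.card (MS α d ℓ m) - 1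

noncomputable def eqS (j : Fin d) (a₀ : α) {ℓ m : ℕ} : MS α d ℓ m ≃ Fin (mC α d ℓ m + 1) :=
  (Fintype.equivFin _).trans (finCongr (by
    have h : 0 < Fintype.card (MS α d ℓ m) :=
      Fintype.card_pos_iff.mpr ⟨(0, fun _ => a₀, ⟨0, j.pos⟩, ⟨0, Nat.succ_pos _⟩)⟩
    unfold mC
    omega))

noncomputable def FSGsim (G : FSRG α ({k : Fin d // k ≠ j} → α) ℓ m) (X : ℕ → α) : FSG α (mC α d ℓ m) where
  δ := fun st a => eqS j (X 0) (δS G ((eqS j (X 0)).symm st) a)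
  bet := fun st a => betS G ((eqS j (X 0)).symm st) a
  bet_nonneg := fun q a => betS_nonneg G _ a
  bet_sum := fun q => betS_sum (Fintype.card_pos_iff.mpr ⟨X 0⟩) G _
  q₀ := eqS j (X 0) (q0S G X)

lemma FSGsim_state (G : FSRG α ({k : Fin d // k ≠ j} → α) ℓ m) (X : ℕ → α) (n : ℕ) :
    (FSGsim G X).state X n = eqS j (X 0) (staS G X n) := by
  induction n with
  | zero => rfl
  | succ n ih =>
      show (FSGsim G X).δ ((FSGsim G X).state X n) (X n) = _
      rw [ih]
      show eqS j (X 0) (δS G ((eqS j (X 0)).symm (eqS j (X 0) (staS G X n))) (X n)) = _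
      rw [Equiv.symm_apply_apply]
      rfl

lemma FSGsim_capital (G : FSRG α ({k : Fin d // k ≠ j} → α) ℓ m) (X : ℕ → α) (t : ℝ)
    (n : ℕ) :
    (FSGsim G X).capital t X (n+1)
      = (Fintype.card α : ℝ) ^ t * ((betS G (staS G X n) (X n) : ℚ) : ℝ) *
        (FSGsim G X).capital t X n := by
  show (Fintype.card α : ℝ) ^ t *
      ((betS G ((eqS j (X 0)).symm ((FSGsim G X).state X n)) (X n) : ℚ) : ℝ) *
      (FSGsim G X).capital t X n = _
  rw [FSGsim_state, Equiv.symm_apply_apply]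

lemma T_zero_step (G : FSRG α ({k : Fin d // k ≠ j} → α) ℓ m) (X : ℕ → α) (s : ℝ) (n : ℕ)
    (hT : TT G X s n = 0) : TT G X s (n+1) = 0 := by
  have h1 : TT G X s (n+1) = WW G X s n (X n) := by
    rw [← TT_reanchor G X s n, W_step G X s n]
  have h2 : WW G X s n (X n) ≤ ∑ a : α, WW G X s n a :=
    Finset.single_le_sum (fun a _ => WW_nonneg G X s n a) (Finset.mem_univ (X n))
  have h3 : ∑ a : α, WW G X s n a = 0 := by
    by_cases hr : n % d = j.val
    · rw [W_sum_j G X s n hr, hT, mul_zero]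
    · rw [W_sum_nj G X s n hr, hT, mul_zero]
  have h4 := WW_nonneg G X s n (X n)
  rw [h1]
  linarith

lemma bet_step (hcard : 0 < Fintype.card α)
    (G : FSRG α ({k : Fin d // k ≠ j} → α) ℓ m) (X : ℕ → α) (s : ℝ) (n : ℕ)
    (hT : 0 < TT G X s n) :
    ((betS G (staS G X n) (X n) : ℚ) : ℝ) *
      ((Fintype.card α : ℝ) ^ (if n % d = j.val then s else (1:ℝ)) * TT G X s n)
      = TT G X s (n+1) := by
  have hκ0 : (0:ℝ) < (Fintype.card α : ℝ) := by exact_mod_cast hcard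
  have hWs : ∑ a : α, WW G X s n a
      = (Fintype.card α : ℝ) ^ (if n % d = j.val then s else (1:ℝ)) * TT G X s n := by
    by_cases hr : n % d = j.val
    · rw [if_pos hr]
      exact W_sum_j G X s n hr
    · rw [if_neg hr, Real.rpow_one]
      exact W_sum_nj G X s n hr
  have hcoef : (0:ℝ) < (Fintype.card α : ℝ) ^ (if n % d = j.val then s else (1:ℝ)) :=
    Real.rpow_pos_of_pos hκ0 _
  set Com := G.capital s (ora j X) (AP X d j.val) (cN d ℓ n) with hCom
  set CC := ((Fintype.card α : ℝ) ^ s) ^ (cntOf j.val (n % d) (pN d ℓ n)) with hCC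
  set q := G.state (ora j X) (AP X d j.val) (cN d ℓ n) with hq
  have hWm : ∀ a : α, WW G X s n a
      = Com * CC * ((wQmach G q (bufX X (EE d ℓ) n) (n % d) (pN d ℓ n) a : ℚ) : ℝ) :=
    fun a => W_match G X s n a
  have hsum : Com * CC *
      ((∑ a : α, wQmach G q (bufX X (EE d ℓ) n) (n % d) (pN d ℓ n) a : ℚ) : ℝ)
      = (Fintype.card α : ℝ) ^ (if n % d = j.val then s else (1:ℝ)) * TT G X s n := by
    rw [← hWs]
    push_cast
    rw [Finset.mul_sum]
    exact Finset.sum_congr rfl (fun a _ => (hWm a).symm)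
  have hSne : ((∑ a : α, wQmach G q (bufX X (EE d ℓ) n) (n % d) (pN d ℓ n) a : ℚ) : ℝ) ≠ 0 := by
    intro hc
    rw [hc, mul_zero] at hsum
    have := mul_pos hcoef hT
    linarith
  have hQne : (∑ a : α, wQmach G q (bufX X (EE d ℓ) n) (n % d) (pN d ℓ n) a) ≠ (0:ℚ) := by
    intro hc
    exact hSne (by rw [hc]; norm_num)
  have hbetval : betS G (staS G X n) (X n)
      = wQmach G q (bufX X (EE d ℓ) n) (n % d) (pN d ℓ n) (X n) /
        ∑ a : α, wQmach G q (bufX X (EE d ℓ) n) (n % d) (pN d ℓ n) a := by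
    rw [staS_eq G X n]
    show (if (∑ a' : α, wQmach G q (bufX X (EE d ℓ) n) (n % d) (pN d ℓ n) a') = 0 then
        (Fintype.card α : ℚ)⁻¹
      else wQmach G q (bufX X (EE d ℓ) n) (n % d) (pN d ℓ n) (X n) /
        ∑ a' : α, wQmach G q (bufX X (EE d ℓ) n) (n % d) (pN d ℓ n) a') = _
    rw [if_neg hQne]
  have hTT1 : TT G X s (n+1)
      = Com * CC * ((wQmach G q (bufX X (EE d ℓ) n) (n % d) (pN d ℓ n) (X n) : ℚ) : ℝ) := by
    rw [← TT_reanchor G X s n, W_step G X s n, hWm (X n)]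
  rw [hbetval, hTT1, ← hsum]
  push_cast
  have hSne2 : (∑ i : α,
      ((wQmach G q (bufX X (EE d ℓ) n) (n % d) (pN d ℓ n) i : ℚ) : ℝ)) ≠ 0 := by
    push_cast at hSne
    exact hSne
  field_simp

end Sim

end APDim
namespace APDim

/-- The key simulation: from a relative gambler succeeding on `A_{d,j}` with the other
AP subsequences as oracle, construct a plain FSG succeeding on `X` at `((d-1)+s)/d`. -/
theorem main_sim {α : Type} [Fintype α] (hα : 2 ≤ Fintype.card α) (X : ℕ → α)
    (d : ℕ) (hd : 0 < d) (j : Fin d) {ℓ m : ℕ} (s : ℝ) (hs : 0 ≤ s)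
    (G : FSRG α ({k : Fin d // k ≠ j} → α) ℓ m)
    (hG : G.Succeeds s (prodSeq fun k : {k : Fin d // k ≠ j} => AP X d (k : Fin d).val)
      (AP X d j.val)) :
    ∃ (m' : ℕ) (G' : FSG α m'), G'.Succeeds (((d : ℝ) - 1 + s) / d) X := by
  classical
  have hcard : 0 < Fintype.card α := by omega
  have hκ0 : (0:ℝ) < (Fintype.card α : ℝ) := by exact_mod_cast hcard
  have hd1 : (1:ℝ) ≤ (d:ℝ) := by exact_mod_cast hd
  have hdR : (0:ℝ) < (d:ℝ) := by linarith
  have hdne : (d:ℝ) ≠ 0 := ne_of_gt hdR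
  set t : ℝ := ((d : ℝ) - 1 + s) / d with ht
  refine ⟨mC α d ℓ m, FSGsim G X, ?_⟩
  have hGC : ∀ C : ℝ, ∃ n', C < G.capital s (ora j X) (AP X d j.val) n' := hG
  have hinv : ∀ n,
      (Fintype.card α : ℝ) ^ ((t - 1) * n + (1 - s) * (iN d j.val n) - (EE d ℓ : ℝ))
        * TT G X s n ≤ (FSGsim G X).capital t X n := by
    intro n
    induction n with
    | zero =>
        rw [TT_zero]
        have he0 : (t - 1) * ((0:ℕ):ℝ) + (1 - s) * ((iN d j.val 0 : ℕ):ℝ) - (EE d ℓ : ℝ)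
            = -(EE d ℓ : ℝ) := by
          rw [iN_zero]
          push_cast
          ring
        rw [he0]
        have hone : (Fintype.card α : ℝ) ^ (-(EE d ℓ : ℝ)) *
            (Fintype.card α : ℝ) ^ (EE d ℓ) = 1 := by
          rw [← Real.rpow_natCast (Fintype.card α : ℝ) (EE d ℓ), ← Real.rpow_add hκ0]
          simp
        rw [hone]
        exact le_of_eq (by rfl)
    | succ n ih =>
        rcases eq_or_lt_of_le (TT_nonneg G X s n) with hT0 | hTpos
        · rw [T_zero_step G X s n hT0.symm, mul_zero]
          exact fsg_capital_nonneg _ _ _ _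
        · rw [FSGsim_capital G X t n]
          have hb := bet_step hcard G X s n hTpos
          set cs : ℝ := if n % d = j.val then s else (1:ℝ) with hcs
          have hee : (t - 1) * (((n+1):ℕ):ℝ) + (1 - s) * ((iN d j.val (n+1) : ℕ):ℝ)
                - (EE d ℓ : ℝ)
              = ((t - 1) * (n:ℝ) + (1 - s) * ((iN d j.val n : ℕ):ℝ) - (EE d ℓ : ℝ))
                + t - cs := by
            rw [iN_succ hd j.val j.isLt n]
            by_cases hr : n % d = j.val
            · rw [hcs, if_pos hr, if_pos hr]
              push_cast
              ring
            · rw [hcs, if_neg hr, if_neg hr]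
              push_cast
              ring
          have hBpos : (0:ℝ) ≤ (Fintype.card α : ℝ) ^ t *
              ((betS G (staS G X n) (X n) : ℚ) : ℝ) := by
            apply mul_nonneg (Real.rpow_nonneg (le_of_lt hκ0) t)
            exact_mod_cast betS_nonneg G _ _
          calc (Fintype.card α : ℝ) ^ ((t - 1) * (((n+1):ℕ):ℝ)
                  + (1 - s) * ((iN d j.val (n+1) : ℕ):ℝ) - (EE d ℓ : ℝ)) * TT G X s (n+1)
              = (Fintype.card α : ℝ) ^ t * ((betS G (staS G X n) (X n) : ℚ) : ℝ) *
                ((Fintype.card α : ℝ) ^ ((t - 1) * (n:ℝ)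
                    + (1 - s) * ((iN d j.val n : ℕ):ℝ) - (EE d ℓ : ℝ)) * TT G X s n) := by
                rw [hee, ← hb]
                have hexp : (Fintype.card α : ℝ) ^ (((t - 1) * (n:ℝ)
                      + (1 - s) * ((iN d j.val n : ℕ):ℝ) - (EE d ℓ : ℝ)) + t - cs)
                      * (Fintype.card α : ℝ) ^ cs
                    = (Fintype.card α : ℝ) ^ ((t - 1) * (n:ℝ)
                        + (1 - s) * ((iN d j.val n : ℕ):ℝ) - (EE d ℓ : ℝ))
                      * (Fintype.card α : ℝ) ^ t := by
                  rw [← Real.rpow_add hκ0, ← Real.rpow_add hκ0]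
                  ring_nf
                linear_combination
                  (((betS G (staS G X n) (X n) : ℚ) : ℝ) * TT G X s n) * hexp
            _ ≤ _ := mul_le_mul_of_nonneg_left ih hBpos
  intro C
  set c0 : ℝ := (Fintype.card α : ℝ) ^ ((s - 1) * j.val / d - (EE d ℓ : ℝ)) with hc0def
  have hc0 : 0 < c0 := Real.rpow_pos_of_pos hκ0 _
  obtain ⟨n', hn'⟩ := hGC (C / c0)
  refine ⟨j.val + n' * d, ?_⟩
  have hiN : iN d j.val (j.val + n' * d) = n' := iN_ap hd j.val j.isLt n'
  have hec : (t - 1) * (((j.val + n' * d : ℕ)):ℝ)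
      + (1 - s) * ((iN d j.val (j.val + n' * d) : ℕ):ℝ) - (EE d ℓ : ℝ)
      = (s - 1) * j.val / d - (EE d ℓ : ℝ) := by
    rw [hiN, ht]
    push_cast
    field_simp
    ring
  have h1 : C < c0 * G.capital s (ora j X) (AP X d j.val) n' := by
    have := (div_lt_iff₀ hc0).mp hn'
    rw [mul_comm] at this
    exact this
  have h2 : c0 * G.capital s (ora j X) (AP X d j.val) n'
      ≤ c0 * TT G X s (j.val + n' * d) := by
    apply mul_le_mul_of_nonneg_left _ (le_of_lt hc0)
    have h := TT_ge G X s (j.val + n' * d)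
    rw [hiN] at h
    exact h
  have h3 := hinv (j.val + n' * d)
  rw [hec] at h3
  calc C < c0 * G.capital s (ora j X) (AP X d j.val) n' := h1
    _ ≤ c0 * TT G X s (j.val + n' * d) := h2
    _ ≤ (FSGsim G X).capital t X (j.val + n' * d) := h3

end APDim
theorem AP_relative_dim_lower_bound_of_dimFS_ge {α : Type} [Fintype α]
    (hα : 2 ≤ Fintype.card α) (X : ℕ → α) (d : ℕ) (hd : 0 < d) (j : Fin d)
    (ε : ℝ) (hε : 0 < ε)
    (hX : ((d : ℝ) - 1) / d + ε ≤ dimFS X) :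
    dimFSRelFam (AP X d j.val) (fun k : {k : Fin d // k ≠ j} => AP X d (k : Fin d).val)
        ≤ dimFS (AP X d j.val) ∧
    (d : ℝ) * ε ≤
      dimFSRelFam (AP X d j.val)
        (fun k : {k : Fin d // k ≠ j} => AP X d (k : Fin d).val) := by
  classical
  constructor
  · unfold dimFSRelFam dimFSRel dimFS
    refine csInf_le_csInf ⟨0, fun x hx => hx.1⟩ ?_ ?_
    · exact ⟨2, by norm_num, APDim.exists_fsg_succeeds_two hα (AP X d j.val)⟩
    rintro s ⟨hs0, m, G, hG⟩
    obtain ⟨G2, hG2⟩ := APDim.fsg_to_fsrg G s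
      (prodSeq fun k : {k : Fin d // k ≠ j} => AP X d (k : Fin d).val) (AP X d j.val) hG
    exact ⟨hs0, 0, m, G2, hG2⟩
  · unfold dimFSRelFam dimFSRel
    refine le_csInf ?_ ?_
    · exact ⟨2, by norm_num, APDim.exists_fsrg_succeeds_two hα _ (AP X d j.val)⟩
    rintro s ⟨hs0, ℓ, m, G, hG⟩
    by_contra hlt
    push_neg at hlt
    obtain ⟨m', G', hG'⟩ := APDim.main_sim hα X d hd j s hs0 G hG
    have hd1 : (1:ℝ) ≤ (d:ℝ) := by exact_mod_cast hd
    have hd0 : (0:ℝ) < (d:ℝ) := by linarith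
    have ht0 : (0:ℝ) ≤ ((d : ℝ) - 1 + s) / d := by
      apply div_nonneg _ (le_of_lt hd0)
      linarith
    have hdim : dimFS X ≤ ((d : ℝ) - 1 + s) / d := by
      unfold dimFS
      exact csInf_le ⟨0, fun x hx => hx.1⟩ ⟨ht0, m', G', hG'⟩
    have hchain : ((d:ℝ) - 1)/d + ε ≤ ((d:ℝ) - 1)/d + s/d := by
      have := le_trans hX hdim
      rw [add_div] at this
      linarith
    have hsd : s / d < ε := by
      rw [div_lt_iff₀ hd0]
      linarith [hlt]
    linarith
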